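/- arXiv:2002.09553 — 2 statements merged into one kernel-verified Lean document; each statement's English description precedes it below -/
import Mathlib

section
/- In the channel model with Markov encoders, for every 1 ≤ t ≤ n, every w ∈ 𝒲 and every y_{1:t} ∈ 𝒴^t with P(W = w, Y_{1:t} = y_{1:t}) > 0, let η_{t-1}(u) := P(U_t = u | Y_{1:t-1} = y_{1:t-1}, W = w). Then for all u_t, u_{t+1} ∈ 𝒰: P(U_t = u_t, U_{t+1} = u_{t+1} | Y_{1:t} = y_{1:t}, W = w) = [η_{t-1}(u_t) · Q^f(y_t | φ_t(w,u_t)) · Σ_z Q^b(z | y_t) · 𝟙{u_{t+1} = G²(u_t, φ_t, z, w)}] / [Σ_u η_{t-1}(u) · Q^f(y_t | φ_t(w,u))]. In particular this update depends only on η_{t-1}, φ_t and y_t. -/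
open scoped ENNReal Classical
open Finset

namespace NoisyFeedback

variable {W X Y Z U : Type*}

/-- Memory evolution: `mem G2 u1 φ w t zs` is the sender's memory after having
observed the feedback symbols `zs = z_{1:t}`. -/
def mem (G2 : U → (W × U → X) → Z → W → U) (u1 : U) (φ : ℕ → W × U → X) (w : W) :
    (t : ℕ) → (Fin t → Z) → U
  | 0, _ => u1
  | t + 1, zs => G2 (mem G2 u1 φ w t (Fin.init zs)) (φ t) (zs (Fin.last t)) w

variable [Fintype W] [Fintype X] [Fintype Y] [Fintype Z] [Fintype U]

/-- Joint pmf `P(W = w, Y_{1:t} = ys, Z_{1:t} = zs)` of the channel model with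
Markov encoders `φ`. -/
noncomputable def jointP (Qf : X → PMF Y) (Qb : Y → PMF Z)
    (G2 : U → (W × U → X) → Z → W → U) (u1 : U) (φ : ℕ → W × U → X)
    (t : ℕ) (w : W) (ys : Fin t → Y) (zs : Fin t → Z) : ℝ≥0∞ :=
  (Fintype.card W : ℝ≥0∞)⁻¹ *
    ∏ i : Fin t,
      Qf (φ i (w, mem G2 u1 φ w i (fun j => zs (Fin.castLE i.2.le j)))) (ys i) *
        Qb (ys i) (zs i)

/-- `P(Y_{1:t} = ys)`. -/
noncomputable def probY (Qf : X → PMF Y) (Qb : Y → PMF Z)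
    (G2 : U → (W × U → X) → Z → W → U) (u1 : U) (φ : ℕ → W × U → X)
    (t : ℕ) (ys : Fin t → Y) : ℝ≥0∞ :=
  ∑ w : W, ∑ zs : Fin t → Z, jointP Qf Qb G2 u1 φ t w ys zs

/-- `P(W = w, Y_{1:t} = ys)`. -/
noncomputable def probWY (Qf : X → PMF Y) (Qb : Y → PMF Z)
    (G2 : U → (W × U → X) → Z → W → U) (u1 : U) (φ : ℕ → W × U → X)
    (t : ℕ) (ys : Fin t → Y) (w : W) : ℝ≥0∞ :=
  ∑ zs : Fin t → Z, jointP Qf Qb G2 u1 φ t w ys zs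

/-- `P(W = w, Z_{1:t} = zs)`. -/
noncomputable def probWZ (Qf : X → PMF Y) (Qb : Y → PMF Z)
    (G2 : U → (W × U → X) → Z → W → U) (u1 : U) (φ : ℕ → W × U → X)
    (t : ℕ) (w : W) (zs : Fin t → Z) : ℝ≥0∞ :=
  ∑ ys : Fin t → Y, jointP Qf Qb G2 u1 φ t w ys zs

/-- `P(W = w, U_{t+1} = u, Y_{1:t} = ys)` (memory after `t` feedback symbols). -/
noncomputable def probWUY (Qf : X → PMF Y) (Qb : Y → PMF Z)
    (G2 : U → (W × U → X) → Z → W → U) (u1 : U) (φ : ℕ → W × U → X)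
    (t : ℕ) (ys : Fin t → Y) (w : W) (u : U) : ℝ≥0∞ :=
  ∑ zs : Fin t → Z,
    if mem G2 u1 φ w t zs = u then jointP Qf Qb G2 u1 φ t w ys zs else 0


/-- `P(W = w, U_t = u, U_{t+1} = u', Y_{1:t} = ys)` for `ys` of length `t`
(0-based: memory before and after the `t`-th feedback symbol). -/
noncomputable def probWUUY (Qf : X → PMF Y) (Qb : Y → PMF Z)
    (G2 : U → (W × U → X) → Z → W → U) (u1 : U) (φ : ℕ → W × U → X)
    (t : ℕ) (ys : Fin (t + 1) → Y) (w : W) (u u' : U) : ℝ≥0∞ :=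
  ∑ zs : Fin (t + 1) → Z,
    if mem G2 u1 φ w t (Fin.init zs) = u ∧ mem G2 u1 φ w (t + 1) zs = u' then
      jointP Qf Qb G2 u1 φ (t + 1) w ys zs
    else 0

lemma pmf_apply_ne_top {α : Type*} (p : PMF α) (a : α) : p a ≠ ⊤ :=
  ne_top_of_le_ne_top ENNReal.one_ne_top (p.coe_le_one a)

lemma sum_pmf_eq_one {α : Type*} [Fintype α] (p : PMF α) : ∑ a : α, p a = 1 := by
  rw [← tsum_fintype (L := SummationFilter.unconditional _)]; exact p.tsum_coe

lemma sum_snoc {t : ℕ} (f : (Fin (t + 1) → Z) → ℝ≥0∞) [Fintype Z] :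
    ∑ zs : Fin (t + 1) → Z, f zs =
      ∑ z : Z, ∑ zs : Fin t → Z, f (Fin.snoc zs z) := by
  rw [← Equiv.sum_comp (Fin.snocEquiv (fun _ => Z)) f, Fintype.sum_prod_type]
  rfl

lemma jointP_succ (Qf : X → PMF Y) (Qb : Y → PMF Z)
    (G2 : U → (W × U → X) → Z → W → U) (u1 : U) (φ : ℕ → W × U → X)
    [Fintype W] (t : ℕ) (w : W) (ys : Fin (t + 1) → Y) (zs : Fin (t + 1) → Z) :
    jointP Qf Qb G2 u1 φ (t + 1) w ys zs =
      jointP Qf Qb G2 u1 φ t w (Fin.init ys) (Fin.init zs) *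
        (Qf (φ t (w, mem G2 u1 φ w t (Fin.init zs))) (ys (Fin.last t)) *
          Qb (ys (Fin.last t)) (zs (Fin.last t))) := by
  unfold jointP
  rw [Fin.prod_univ_castSucc, ← mul_assoc]
  congr 2

lemma jointP_ne_top (Qf : X → PMF Y) (Qb : Y → PMF Z)
    (G2 : U → (W × U → X) → Z → W → U) (u1 : U) (φ : ℕ → W × U → X)
    [Fintype W] [Nonempty W] (t : ℕ) (w : W) (ys : Fin t → Y) (zs : Fin t → Z) :
    jointP Qf Qb G2 u1 φ t w ys zs ≠ ⊤ := by
  unfold jointP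
  apply ENNReal.mul_ne_top
  · simp [Fintype.card_ne_zero]
  · apply ENNReal.prod_ne_top
    intro i _
    exact ENNReal.mul_ne_top (pmf_apply_ne_top _ _) (pmf_apply_ne_top _ _)

lemma probWY_succ (Qf : X → PMF Y) (Qb : Y → PMF Z)
    (G2 : U → (W × U → X) → Z → W → U) (u1 : U) (φ : ℕ → W × U → X)
    [Fintype W] [Fintype Z] [Fintype U] (t : ℕ) (w : W) (ys : Fin (t + 1) → Y) :
    probWY Qf Qb G2 u1 φ (t + 1) ys w =
      ∑ u : U, probWUY Qf Qb G2 u1 φ t (Fin.init ys) w u *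
        Qf (φ t (w, u)) (ys (Fin.last t)) := by
  unfold probWY probWUY
  rw [sum_snoc]
  have hL : ∀ z : Z, ∀ zs : Fin t → Z,
      jointP Qf Qb G2 u1 φ (t + 1) w ys (Fin.snoc zs z) =
        jointP Qf Qb G2 u1 φ t w (Fin.init ys) zs *
          (Qf (φ t (w, mem G2 u1 φ w t zs)) (ys (Fin.last t)) *
            Qb (ys (Fin.last t)) z) := by
    intro z zs
    rw [jointP_succ]
    simp [Fin.init_snoc, Fin.snoc_last]
  calc ∑ z : Z, ∑ zs : Fin t → Z, jointP Qf Qb G2 u1 φ (t + 1) w ys (Fin.snoc zs z)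
      = ∑ zs : Fin t → Z, ∑ z : Z,
          jointP Qf Qb G2 u1 φ t w (Fin.init ys) zs *
            (Qf (φ t (w, mem G2 u1 φ w t zs)) (ys (Fin.last t)) *
              Qb (ys (Fin.last t)) z) := by
        rw [Finset.sum_comm]
        exact Finset.sum_congr rfl fun zs _ => Finset.sum_congr rfl fun z _ => hL z zs
    _ = ∑ zs : Fin t → Z,
          jointP Qf Qb G2 u1 φ t w (Fin.init ys) zs *
            Qf (φ t (w, mem G2 u1 φ w t zs)) (ys (Fin.last t)) := by
        apply Finset.sum_congr rfl
        intro zs _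
        rw [← Finset.mul_sum]
        simp only [← mul_assoc, ← Finset.mul_sum, sum_pmf_eq_one, mul_one]
    _ = ∑ u : U, (∑ zs : Fin t → Z,
          if mem G2 u1 φ w t zs = u then jointP Qf Qb G2 u1 φ t w (Fin.init ys) zs else 0) *
            Qf (φ t (w, u)) (ys (Fin.last t)) := by
        simp only [Finset.sum_mul]
        rw [Finset.sum_comm]
        apply Finset.sum_congr rfl
        intro zs _
        simp only [ite_mul, zero_mul]
        simp

lemma probWUUY_eq (Qf : X → PMF Y) (Qb : Y → PMF Z)
    (G2 : U → (W × U → X) → Z → W → U) (u1 : U) (φ : ℕ → W × U → X)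
    [Fintype W] [Fintype Z] [Fintype U] (t : ℕ) (w : W) (ys : Fin (t + 1) → Y)
    (ut ut1 : U) :
    probWUUY Qf Qb G2 u1 φ t ys w ut ut1 =
      probWUY Qf Qb G2 u1 φ t (Fin.init ys) w ut * Qf (φ t (w, ut)) (ys (Fin.last t)) *
        ∑ z : Z, Qb (ys (Fin.last t)) z * (if ut1 = G2 ut (φ t) z w then 1 else 0) := by
  unfold probWUUY probWUY
  rw [sum_snoc, Finset.sum_comm, Finset.sum_mul, Finset.sum_mul]
  apply Finset.sum_congr rfl
  intro zs _
  rw [Finset.mul_sum]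
  apply Finset.sum_congr rfl
  intro z _
  have hmem : mem G2 u1 φ w (t + 1) (Fin.snoc zs z) =
      G2 (mem G2 u1 φ w t zs) (φ t) z w := by
    simp only [mem, Fin.init_snoc, Fin.snoc_last]
  rw [jointP_succ]
  simp only [Fin.init_snoc, Fin.snoc_last, hmem]
  by_cases h1 : mem G2 u1 φ w t zs = ut
  · by_cases h2 : ut1 = G2 ut (φ t) z w
    · rw [if_pos ⟨h1, by rw [h1]; exact h2.symm⟩, if_pos h1, if_pos h2, h1]
      ring
    · rw [if_neg (fun h => h2 (by rw [h1] at h; exact h.2.symm)), if_pos h1, if_neg h2]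
      ring
  · rw [if_neg (fun h => h1 h.1), if_neg h1]
    ring

lemma sum_probWUY (Qf : X → PMF Y) (Qb : Y → PMF Z)
    (G2 : U → (W × U → X) → Z → W → U) (u1 : U) (φ : ℕ → W × U → X)
    [Fintype W] [Fintype Z] [Fintype U] (t : ℕ) (w : W) (ys : Fin t → Y) :
    ∑ u : U, probWUY Qf Qb G2 u1 φ t ys w u = probWY Qf Qb G2 u1 φ t ys w := by
  unfold probWUY probWY
  rw [Finset.sum_comm]
  apply Finset.sum_congr rfl
  intro zs _
  simp

/-- **Policy-independent update of the conditional law of `(U_t, U_{t+1})` given the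
message** (Statement 3).  With `η_{t-1}(u) = P(U_t = u | Y_{1:t-1}, W = w)`, the
conditional law of `(U_t, U_{t+1})` given `(Y_{1:t}, W = w)` depends only on
`η_{t-1}`, the current encoding function and the current output. -/
theorem posterior_UU_update [Nonempty W] [Nonempty X] [Nonempty Y] [Nonempty Z] [Nonempty U]
    (Qf : X → PMF Y) (Qb : Y → PMF Z)
    (G2 : U → (W × U → X) → Z → W → U) (u1 : U) (φ : ℕ → W × U → X)
    (n t : ℕ) (ht : t + 1 ≤ n) (w : W) (ys : Fin (t + 1) → Y)
    (hpos : 0 < probWY Qf Qb G2 u1 φ (t + 1) ys w)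
    (ut ut1 : U) :
    probWUUY Qf Qb G2 u1 φ t ys w ut ut1 / probWY Qf Qb G2 u1 φ (t + 1) ys w =
      ((probWUY Qf Qb G2 u1 φ t (Fin.init ys) w ut /
            probWY Qf Qb G2 u1 φ t (Fin.init ys) w) *
          Qf (φ t (w, ut)) (ys (Fin.last t)) *
          ∑ z : Z, Qb (ys (Fin.last t)) z *
            (if ut1 = G2 ut (φ t) z w then 1 else 0)) /
        ∑ u : U,
          (probWUY Qf Qb G2 u1 φ t (Fin.init ys) w u /
              probWY Qf Qb G2 u1 φ t (Fin.init ys) w) *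
            Qf (φ t (w, u)) (ys (Fin.last t)) := by
  set D := probWY Qf Qb G2 u1 φ t (Fin.init ys) w with hD
  set B : U → ℝ≥0∞ := fun u => probWUY Qf Qb G2 u1 φ t (Fin.init ys) w u with hB
  set q : U → ℝ≥0∞ := fun u => Qf (φ t (w, u)) (ys (Fin.last t)) with hq
  set S : ℝ≥0∞ := ∑ z : Z, Qb (ys (Fin.last t)) z *
    (if ut1 = G2 ut (φ t) z w then 1 else 0) with hS
  -- finiteness and positivity of D
  have hDtop : D ≠ ⊤ := by
    rw [hD]
    unfold probWY
    rw [ENNReal.sum_ne_top]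
    exact fun zs _ => jointP_ne_top Qf Qb G2 u1 φ t w (Fin.init ys) zs
  have hsum : ∑ u : U, B u = D := sum_probWUY Qf Qb G2 u1 φ t w (Fin.init ys)
  have hsucc : probWY Qf Qb G2 u1 φ (t + 1) ys w = ∑ u : U, B u * q u :=
    probWY_succ Qf Qb G2 u1 φ t w ys
  have hD0 : D ≠ 0 := by
    intro h0
    have hB0 : ∀ u : U, B u = 0 := by
      intro u
      have := hsum
      rw [h0, Finset.sum_eq_zero_iff] at this
      exact this u (Finset.mem_univ u)
    rw [hsucc] at hpos
    simp [hB0] at hpos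
  -- rewrite both sides
  rw [probWUUY_eq Qf Qb G2 u1 φ t w ys ut ut1, hsucc]
  have hnum : B ut / D * q ut * S = B ut * q ut * S * D⁻¹ := by
    rw [ENNReal.div_eq_inv_mul]; ring
  have hden : ∑ u : U, B u / D * q u = (∑ u : U, B u * q u) * D⁻¹ := by
    rw [Finset.sum_mul]
    apply Finset.sum_congr rfl
    intro u _
    rw [ENNReal.div_eq_inv_mul]; ring
  rw [hnum, hden]
  rw [div_eq_mul_inv, div_eq_mul_inv,
    ENNReal.mul_inv (Or.inr (ENNReal.inv_ne_top.mpr hD0))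
      (Or.inr (ENNReal.inv_ne_zero.mpr hDtop))]
  rw [show B ut * q ut * S * D⁻¹ * (((∑ u : U, B u * q u))⁻¹ * D⁻¹⁻¹) =
      B ut * q ut * S * (∑ u : U, B u * q u)⁻¹ * (D⁻¹ * D⁻¹⁻¹) by ring]
  rw [ENNReal.mul_inv_cancel (ENNReal.inv_ne_zero.mpr hDtop)
    (ENNReal.inv_ne_top.mpr hD0), mul_one]

end NoisyFeedback
end

section
/- (Theorem 1.) In the channel model, define the dynamic-programming value functions: V_{n+1}(σ, u, w) := Σ_{(π,η)} σ(π,η) · (1 − max_{w̃} π(w̃)), and for t = n down to 1, V_t(σ, u, w) := min over φ ∈ (𝒲 × 𝒰 → 𝒳) of Σ_{y,z} Q^f(y | φ(w,u)) · Q^b(z | y) · V_{t+1}(G¹(σ, φ, z, u, w), G²(u, φ, z, w), w). Then for every history-dependent deterministic encoder ψ = (ψ_t)_{t=1}^n with ψ_t : 𝒲 × 𝒵^{t-1} → 𝒳, the error probability of the scheme (ψ, MAP decoder) satisfies P_e(ψ) ≥ (1/|𝒲|) Σ_w V_1(σ₀, u₁, w), where σ₀ is the point mass at (uniform on 𝒲,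 w ↦ point mass at u₁). Consequently, any encoder achieving (1/|𝒲|) Σ_w V_1(σ₀, u₁, w) — in particular one whose time-t encoding function attains, at every reachable sender belief state, the minimum in the recursion defining V_t — is optimal among all history-dependent encoders. -/
open scoped ENNReal Classical
open Finset

namespace NoisyFeedback

variable {W X Y Z U : Type*}

variable [Fintype W] [Fintype X] [Fintype Y] [Fintype Z] [Fintype U]

/-- Belief states of the receiver: a belief `π` on the message together with, for each
message `w`, a belief `η w` on the sender's memory. -/
@[reducible] def Belief (W U : Type*) : Type _ := (W → ℝ≥0∞) × (W → U → ℝ≥0∞)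

/-- Update map `F¹` of the receiver's belief on the message. -/
noncomputable def F1 (Qf : X → PMF Y) (p : Belief W U) (φ : W × U → X) (y : Y) :
    W → ℝ≥0∞ := fun w =>
  p.1 w * (∑ u : U, p.2 w u * Qf (φ (w, u)) y) /
    ∑ w' : W, p.1 w' * ∑ u : U, p.2 w' u * Qf (φ (w', u)) y

/-- Update map `F²` of the receiver's conditional belief on the sender's memory. -/
noncomputable def F2 (Qf : X → PMF Y) (Qb : Y → PMF Z)
    (G2 : U → (W × U → X) → Z → W → U) (p : Belief W U) (φ : W × U → X) (y : Y) :
    W → U → ℝ≥0∞ := fun w u' =>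
  (∑ u : U, ∑ z : Z,
      p.2 w u * Qf (φ (w, u)) y * Qb y z * (if u' = G2 u φ z w then 1 else 0)) /
    ∑ u : U, p.2 w u * Qf (φ (w, u)) y

/-- Combined belief update `F = (F¹, F²)`. -/
noncomputable def Fb (Qf : X → PMF Y) (Qb : Y → PMF Z)
    (G2 : U → (W × U → X) → Z → W → U) (p : Belief W U) (φ : W × U → X) (y : Y) :
    Belief W U :=
  (F1 Qf p φ y, F2 Qf Qb G2 p φ y)

/-- Sender belief update `G¹`: update of the sender's belief `σ` over receiver belief
states upon transmitting with encoding function `φ` (with memory `u`, message `w`)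
and receiving feedback `z`. -/
noncomputable def G1 (Qf : X → PMF Y) (Qb : Y → PMF Z)
    (G2 : U → (W × U → X) → Z → W → U) (σ : Belief W U → ℝ≥0∞)
    (φ : W × U → X) (z : Z) (u : U) (w : W) : Belief W U → ℝ≥0∞ := fun b =>
  (∑' p : Belief W U, σ p * ∑ y : Y,
      Qf (φ (w, u)) y * Qb y z * (if b = Fb Qf Qb G2 p φ y then 1 else 0)) /
    ∑ y : Y, Qf (φ (w, u)) y * Qb y z

/-- Initial belief state: uniform on the messages, point mass at `u1` on the memory. -/
noncomputable def b0 [Fintype W] (u1 : U) : Belief W U :=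
  (fun _ => (Fintype.card W : ℝ≥0∞)⁻¹, fun _ u => if u = u1 then 1 else 0)

/-- Initial sender belief: point mass at the initial belief state `b0`. -/
noncomputable def σ0 [Fintype W] (u1 : U) : Belief W U → ℝ≥0∞ := fun b =>
  if b = b0 u1 then 1 else 0

/-- The receiver belief process `(Π_t, H_t)` as a function of the channel outputs,
under the Markov encoders `φ`. -/
noncomputable def beliefs (Qf : X → PMF Y) (Qb : Y → PMF Z)
    (G2 : U → (W × U → X) → Z → W → U) (u1 : U) (φ : ℕ → W × U → X) :
    (t : ℕ) → (Fin t → Y) → Belief W U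
  | 0, _ => b0 u1
  | t + 1, ys =>
      Fb Qf Qb G2 (beliefs Qf Qb G2 u1 φ t (Fin.init ys)) (φ t) (ys (Fin.last t))

/-- Dynamic-programming value functions, indexed by the number `k` of remaining
transmissions: `Vk k = V_{n+1-k}` of the paper, so `Vk 0 = V_{n+1}` is the terminal
cost `Σ_{(π,η)} σ(π,η) (1 - max_w̃ π(w̃))`, and each step minimizes over the (finitely
many) encoding functions `φ : 𝒲 × 𝒰 → 𝒳`. -/
noncomputable def Vk (Qf : X → PMF Y) (Qb : Y → PMF Z)
    (G2 : U → (W × U → X) → Z → W → U) :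
    ℕ → (Belief W U → ℝ≥0∞) → U → W → ℝ≥0∞
  | 0, σ, _, _ => ∑' p : Belief W U, σ p * (1 - univ.sup fun w' : W => p.1 w')
  | k + 1, σ, u, w =>
      ⨅ φ : W × U → X,
        ∑ y : Y, ∑ z : Z,
          Qf (φ (w, u)) y * Qb y z *
            Vk Qf Qb G2 k (G1 Qf Qb G2 σ φ z u w) (G2 u φ z w) w

/-- Memory evolution under a history-dependent encoder `ψ`:
`U_{t+1} = G²(U_t, φ^{z_{1:t-1}}_t, Z_t, W)` where `φ^{z_{1:t-1}}_t (w', u') = ψ_t (w', z_{1:t-1})`. -/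
def memψ (G2 : U → (W × U → X) → Z → W → U) (u1 : U)
    (ψ : (t : ℕ) → W → (Fin t → Z) → X) (w : W) :
    (t : ℕ) → (Fin t → Z) → U
  | 0, _ => u1
  | t + 1, zs =>
      G2 (memψ G2 u1 ψ w t (Fin.init zs))
        (fun p : W × U => ψ t p.1 (Fin.init zs)) (zs (Fin.last t)) w

/-- Joint pmf `P(W = w, Y_{1:t} = ys, Z_{1:t} = zs)` of the channel model with a
history-dependent deterministic encoder `ψ` (so `X_t = ψ_t (W, Z_{1:t-1})`). -/
noncomputable def jointPψ (Qf : X → PMF Y) (Qb : Y → PMF Z)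
    (ψ : (t : ℕ) → W → (Fin t → Z) → X)
    (t : ℕ) (w : W) (ys : Fin t → Y) (zs : Fin t → Z) : ℝ≥0∞ :=
  (Fintype.card W : ℝ≥0∞)⁻¹ *
    ∏ i : Fin t,
      Qf (ψ i w (fun j => zs (Fin.castLE i.2.le j))) (ys i) * Qb (ys i) (zs i)

/-- `P(W = w, Z_{1:t} = zs)` under the encoder `ψ`. -/
noncomputable def probWZψ (Qf : X → PMF Y) (Qb : Y → PMF Z)
    (ψ : (t : ℕ) → W → (Fin t → Z) → X)
    (t : ℕ) (w : W) (zs : Fin t → Z) : ℝ≥0∞ :=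
  ∑ ys : Fin t → Y, jointPψ Qf Qb ψ t w ys zs

/-- `P(W = w, Y_{1:t} = ys)` under the encoder `ψ`. -/
noncomputable def probWYψ (Qf : X → PMF Y) (Qb : Y → PMF Z)
    (ψ : (t : ℕ) → W → (Fin t → Z) → X)
    (t : ℕ) (ys : Fin t → Y) (w : W) : ℝ≥0∞ :=
  ∑ zs : Fin t → Z, jointPψ Qf Qb ψ t w ys zs


section DP
set_option linter.unusedSectionVars false

variable [Fintype W] [Fintype X] [Fintype Y] [Fintype Z] [Fintype U]

lemma sum_snoc_s9 {α β : Type*} [Fintype α] [AddCommMonoid β] (t : ℕ)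
    (F : (Fin (t + 1) → α) → β) :
    ∑ f : Fin (t + 1) → α, F f = ∑ g : Fin t → α, ∑ a : α, F (Fin.snoc g a) := by
  calc ∑ f : Fin (t + 1) → α, F f
      = ∑ p : (Fin t → α) × α, F (Fin.snoc p.1 p.2) :=
        (Equiv.sum_comp (⟨fun p => Fin.snoc p.1 p.2, fun f => (Fin.init f, f (Fin.last t)),
          fun p => by simp, fun f => by simp⟩ : (Fin t → α) × α ≃ (Fin (t+1) → α)) F).symm
    _ = ∑ g : Fin t → α, ∑ a : α, F (Fin.snoc g a) := Fintype.sum_prod_type _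

lemma tsum_ite_mul {ι : Type*} [Fintype ι] (c : ι → ℝ≥0∞) (bf : ι → Belief W U)
    (g : Belief W U → ℝ≥0∞) :
    ∑' p : Belief W U, (∑ i : ι, c i * if p = bf i then 1 else 0) * g p
      = ∑ i : ι, c i * g (bf i) := by
  have h : ∀ p : Belief W U, (∑ i : ι, c i * if p = bf i then 1 else 0) * g p
      = ∑ i : ι, c i * ((if p = bf i then 1 else 0) * g p) := by
    intro p; rw [Finset.sum_mul]; simp [mul_assoc]
  simp_rw [h]
  rw [Summable.tsum_finsetSum (fun i _ => ENNReal.summable)]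
  refine Finset.sum_congr rfl fun i _ => ?_
  rw [ENNReal.tsum_mul_left]
  congr 1
  rw [tsum_eq_single (bf i) (fun p hp => by simp [if_neg hp])]
  simp

variable (Qf : X → PMF Y) (Qb : Y → PMF Z) (G2 : U → (W × U → X) → Z → W → U)
  (u1 : U) (ψ : (t : ℕ) → W → (Fin t → Z) → X)

/-- Receiver belief process under the history-dependent encoder `ψ`. -/
noncomputable def bel : (t : ℕ) → (Fin t → Y) → (Fin t → Z) → Belief W U
  | 0, _, _ => b0 u1
  | t + 1, ys, zs =>
      Fb Qf Qb G2 (bel t (Fin.init ys) (Fin.init zs))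
        (fun p => ψ t p.1 (Fin.init zs)) (ys (Fin.last t))

/-- Conditional law of `Y_{1:t}` given `(W, Z_{1:t})`. -/
noncomputable def cndY (t : ℕ) (w : W) (ys : Fin t → Y) (zs : Fin t → Z) : ℝ≥0∞ :=
  jointPψ Qf Qb ψ t w ys zs / probWZψ Qf Qb ψ t w zs

/-- Conditional law of the receiver's belief state given `(W, Z_{1:t})`. -/
noncomputable def sb (t : ℕ) (w : W) (zs : Fin t → Z) : Belief W U → ℝ≥0∞ := fun b =>
  ∑ ys : Fin t → Y,
    cndY Qf Qb ψ t w ys zs * if b = bel Qf Qb G2 u1 ψ t ys zs then 1 else 0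

/-- Expected terminal cost with `k` remaining transmissions, given the trajectory so far. -/
noncomputable def Rem (w : W) : (k : ℕ) → (t : ℕ) → (Fin t → Y) → (Fin t → Z) → ℝ≥0∞
  | 0, t, ys, zs => 1 - univ.sup fun w' : W => (bel Qf Qb G2 u1 ψ t ys zs).1 w'
  | k + 1, t, ys, zs =>
      ∑ y : Y, ∑ z : Z, Qf (ψ t w zs) y * Qb y z *
        Rem w k (t + 1) (Fin.snoc ys y) (Fin.snoc zs z)

/-- Expected remaining cost given `(W, Z_{1:t})`. -/
noncomputable def Cost (k t : ℕ) (w : W) (zs : Fin t → Z) : ℝ≥0∞ :=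
  ∑ ys : Fin t → Y,
    cndY Qf Qb ψ t w ys zs * Rem Qf Qb G2 u1 ψ w k t ys zs

/-- Unconditional expected remaining cost at time `t` with `k` remaining transmissions. -/
noncomputable def Tv (k t : ℕ) : ℝ≥0∞ :=
  ∑ w : W, ∑ ys : Fin t → Y, ∑ zs : Fin t → Z,
    jointPψ Qf Qb ψ t w ys zs * Rem Qf Qb G2 u1 ψ w k t ys zs

lemma sum_Qf (x : X) : ∑ y : Y, Qf x y = 1 := by
  rw [← tsum_fintype (L := SummationFilter.unconditional _)]; exact (Qf x).tsum_coe

lemma sum_Qb (y : Y) : ∑ z : Z, Qb y z = 1 := by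
  rw [← tsum_fintype (L := SummationFilter.unconditional _)]; exact (Qb y).tsum_coe

lemma sum_QfQb_le_one (x : X) (z : Z) : ∑ y : Y, Qf x y * Qb y z ≤ 1 := by
  calc ∑ y : Y, Qf x y * Qb y z ≤ ∑ y : Y, Qf x y :=
        Finset.sum_le_sum fun y _ => mul_le_of_le_one_right' (PMF.coe_le_one _ _)
    _ = 1 := sum_Qf Qf x

lemma card_inv_le_one [Nonempty W] : ((Fintype.card W : ℝ≥0∞))⁻¹ ≤ 1 :=
  ENNReal.inv_le_one.mpr (by exact_mod_cast Nat.one_le_iff_ne_zero.mpr Fintype.card_ne_zero)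

lemma card_inv_ne_zero : ((Fintype.card W : ℝ≥0∞))⁻¹ ≠ 0 :=
  ENNReal.inv_ne_zero.mpr (ENNReal.natCast_ne_top _)

lemma card_inv_ne_top [Nonempty W] : ((Fintype.card W : ℝ≥0∞))⁻¹ ≠ ⊤ :=
  ENNReal.inv_ne_top.mpr (by exact_mod_cast Fintype.card_ne_zero)

lemma snoc_castLE {α : Type*} {t m : ℕ} (zs : Fin t → α) (z : α) (h' : m ≤ t + 1)
    (h : m ≤ t) (j : Fin m) :
    (Fin.snoc zs z : Fin (t + 1) → α) (Fin.castLE h' j) = zs (Fin.castLE h j) := by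
  have he : Fin.castLE h' j = Fin.castSucc (Fin.castLE h j) := by ext; simp
  rw [he, Fin.snoc_castSucc]

lemma jointPψ_succ (t : ℕ) (w : W) (ys : Fin t → Y) (zs : Fin t → Z) (y : Y) (z : Z) :
    jointPψ Qf Qb ψ (t + 1) w (Fin.snoc ys y) (Fin.snoc zs z) =
      jointPψ Qf Qb ψ t w ys zs * (Qf (ψ t w zs) y * Qb y z) := by
  unfold jointPψ
  rw [Fin.prod_univ_castSucc]
  simp only [Fin.snoc_castSucc, Fin.snoc_last, Fin.coe_castSucc, Fin.val_last]
  have hprod : (∏ x : Fin t,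
        (Qf (ψ (x : ℕ) w fun j => (Fin.snoc zs z : Fin (t + 1) → Z) (Fin.castLE (Nat.le_succ_of_le x.2.le) j)))
            (ys x) * (Qb (ys x)) (zs x))
      = ∏ x : Fin t, (Qf (ψ (x : ℕ) w fun j => zs (Fin.castLE x.2.le j))) (ys x) *
          (Qb (ys x)) (zs x) :=
    Finset.prod_congr rfl fun x _ => by
      have h : (fun j : Fin (x : ℕ) =>
            (Fin.snoc zs z : Fin (t + 1) → Z) (Fin.castLE (Nat.le_succ_of_le x.2.le) j))
          = fun j => zs (Fin.castLE x.2.le j) :=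
        funext fun j => snoc_castLE zs z _ x.2.le j
      rw [h]
  have hlast : (fun j : Fin t => (Fin.snoc zs z : Fin (t + 1) → Z) (Fin.castLE (Nat.le_succ t) j)) = zs := by
    funext j
    rw [snoc_castLE zs z _ le_rfl j]
    simp
  rw [hprod, hlast]
  ring

lemma jointPψ_zero (w : W) (ys : Fin 0 → Y) (zs : Fin 0 → Z) :
    jointPψ Qf Qb ψ 0 w ys zs = (Fintype.card W : ℝ≥0∞)⁻¹ := by
  simp [jointPψ]

lemma jointPψ_le_probWZψ (t : ℕ) (w : W) (ys : Fin t → Y) (zs : Fin t → Z) :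
    jointPψ Qf Qb ψ t w ys zs ≤ probWZψ Qf Qb ψ t w zs := by
  unfold probWZψ
  exact Finset.single_le_sum (f := fun ys => jointPψ Qf Qb ψ t w ys zs)
    (fun _ _ => zero_le) (Finset.mem_univ ys)

lemma probWZψ_le_one [Nonempty W] (t : ℕ) (w : W) (zs : Fin t → Z) :
    probWZψ Qf Qb ψ t w zs ≤ 1 := by
  unfold probWZψ jointPψ
  rw [← Finset.mul_sum]
  have h : ∑ ys : Fin t → Y, ∏ i : Fin t,
      Qf (ψ (i : ℕ) w fun j => zs (Fin.castLE i.2.le j)) (ys i) * Qb (ys i) (zs i)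
      = ∏ i : Fin t, ∑ y : Y,
        Qf (ψ (i : ℕ) w fun j => zs (Fin.castLE i.2.le j)) y * Qb y (zs i) := by
    rw [Finset.prod_univ_sum]
    rw [Fintype.piFinset_univ]
  rw [h]
  exact mul_le_one' (card_inv_le_one)
    (Finset.prod_le_one (fun _ _ => zero_le) fun i _ => sum_QfQb_le_one Qf Qb _ _)

lemma probWZψ_zero [Nonempty W] (w : W) (zs : Fin 0 → Z) :
    probWZψ Qf Qb ψ 0 w zs = (Fintype.card W : ℝ≥0∞)⁻¹ := by
  unfold probWZψ
  rw [Fintype.sum_subsingleton _ (Fin.elim0 : Fin 0 → Y)]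
  exact jointPψ_zero Qf Qb ψ w _ zs

lemma probWZψ_succ (t : ℕ) (w : W) (zs : Fin t → Z) (z : Z) :
    probWZψ Qf Qb ψ (t + 1) w (Fin.snoc zs z) =
      probWZψ Qf Qb ψ t w zs * ∑ y : Y, Qf (ψ t w zs) y * Qb y z := by
  unfold probWZψ
  rw [sum_snoc_s9]
  simp_rw [jointPψ_succ]
  rw [Finset.sum_mul]
  exact Finset.sum_congr rfl fun ys _ => (Finset.mul_sum _ _ _).symm

lemma sum_div' {ι : Type*} (s : Finset ι) (f : ι → ℝ≥0∞) (a : ℝ≥0∞) :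
    (∑ i ∈ s, f i) / a = ∑ i ∈ s, f i / a := by
  simp only [div_eq_mul_inv, Finset.sum_mul]

lemma F2_mass (p : Belief W U) (φ : W × U → X) (y : Y) (w : W) :
    ∑ u' : U, F2 Qf Qb G2 p φ y w u' =
      (∑ u : U, p.2 w u * Qf (φ (w, u)) y) / (∑ u : U, p.2 w u * Qf (φ (w, u)) y) := by
  unfold F2
  rw [← sum_div']
  congr 1
  rw [Finset.sum_comm]
  refine Finset.sum_congr rfl fun u _ => ?_
  rw [Finset.sum_comm]
  calc ∑ z : Z, ∑ u' : U,
        p.2 w u * Qf (φ (w, u)) y * Qb y z * (if u' = G2 u φ z w then 1 else 0)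
      = ∑ z : Z, p.2 w u * Qf (φ (w, u)) y * Qb y z := by
        refine Finset.sum_congr rfl fun z _ => ?_
        rw [← Finset.mul_sum]
        simp
    _ = p.2 w u * Qf (φ (w, u)) y := by
        rw [← Finset.mul_sum, sum_Qb Qb y, mul_one]

lemma arith (S π m q b D : ℝ≥0∞) (hm : m = 0 ∨ m = 1) (hq : q ≤ 1) (hD : D ≤ 1)
    (hterm : π * (m * q) ≤ D) :
    S * (π * m) * (q * b) = S * D * b * (π * (m * q) / D * (m * q / (m * q))) := by
  rcases hm with hm | hm
  · subst hm; simp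
  · subst hm
    simp only [one_mul, mul_one]
    rcases eq_or_ne q 0 with hq0 | hq0
    · rw [hq0]; simp
    · have hqt : q ≠ ⊤ := (hq.trans_lt ENNReal.one_lt_top).ne
      rw [ENNReal.div_self hq0 hqt, mul_one]
      rcases eq_or_ne D 0 with hD0 | hD0
      · have h0 : π * q = 0 := le_antisymm (by simpa [hD0] using hterm) (zero_le)
        rcases mul_eq_zero.mp h0 with h | h
        · rw [h]; simp
        · exact absurd h hq0
      · have hDt : D ≠ ⊤ := (hD.trans_lt ENNReal.one_lt_top).ne
        rw [show S * D * b * (π * q / D) = S * b * (D * (π * q / D)) by ring,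
          ENNReal.mul_div_cancel hD0 hDt]
        ring

lemma master [Nonempty W] (t : ℕ) : ∀ (ys : Fin t → Y) (zs : Fin t → Z),
    (∀ w : W, (∑ u : U, (bel Qf Qb G2 u1 ψ t ys zs).2 w u = 0) ∨
          (∑ u : U, (bel Qf Qb G2 u1 ψ t ys zs).2 w u = 1)) ∧
    (∑ w : W, (bel Qf Qb G2 u1 ψ t ys zs).1 w * ∑ u : U, (bel Qf Qb G2 u1 ψ t ys zs).2 w u
      ≤ 1) ∧
    (∀ w : W, jointPψ Qf Qb ψ t w ys zs =
      (∑ w' : W, jointPψ Qf Qb ψ t w' ys zs) *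
        ((bel Qf Qb G2 u1 ψ t ys zs).1 w * ∑ u : U, (bel Qf Qb G2 u1 ψ t ys zs).2 w u)) := by
  induction t with
  | zero =>
    intro ys zs
    have hcard : (Fintype.card W : ℝ≥0∞) * (Fintype.card W : ℝ≥0∞)⁻¹ = 1 :=
      ENNReal.mul_inv_cancel (by exact_mod_cast Fintype.card_ne_zero) (ENNReal.natCast_ne_top _)
    have hm : ∀ w : W, ∑ u : U, (bel Qf Qb G2 u1 ψ 0 ys zs).2 w u = 1 := by
      intro w
      show ∑ u : U, (if u = u1 then (1 : ℝ≥0∞) else 0) = 1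
      simp
    have hπ : ∀ w : W, (bel Qf Qb G2 u1 ψ 0 ys zs).1 w = (Fintype.card W : ℝ≥0∞)⁻¹ :=
      fun _ => rfl
    refine ⟨fun w => Or.inr (hm w), ?_, ?_⟩
    · simp only [hm, hπ, mul_one]
      rw [Finset.sum_const, nsmul_eq_mul, Finset.card_univ, hcard]
    · intro w
      simp only [hm, hπ, mul_one, jointPψ_zero]
      rw [Finset.sum_const, nsmul_eq_mul, Finset.card_univ, hcard, one_mul]
  | succ t ih =>
    intro ys zs
    obtain ⟨ihm, ihs, ihj⟩ := ih (Fin.init ys) (Fin.init zs)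
    set p : Belief W U := bel Qf Qb G2 u1 ψ t (Fin.init ys) (Fin.init zs) with hp
    have hbel : bel Qf Qb G2 u1 ψ (t + 1) ys zs =
        Fb Qf Qb G2 p (fun q => ψ t q.1 (Fin.init zs)) (ys (Fin.last t)) := by
      rw [bel]
    set φ : W × U → X := fun q => ψ t q.1 (Fin.init zs) with hφ
    set y : Y := ys (Fin.last t) with hy
    have hsum : ∀ w : W, (∑ u : U, p.2 w u * Qf (φ (w, u)) y)
        = (∑ u : U, p.2 w u) * Qf (ψ t w (Fin.init zs)) y := by
      intro w
      show ∑ u : U, p.2 w u * Qf (ψ t w (Fin.init zs)) y = _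
      exact (Finset.sum_mul _ _ _).symm
    have hmle : ∀ w : W, (∑ u : U, p.2 w u) ≤ 1 := by
      intro w; rcases ihm w with h | h <;> rw [h] <;> exact zero_le
    have hQfle : ∀ w : W, Qf (ψ t w (Fin.init zs)) y ≤ 1 := fun w => PMF.coe_le_one _ _
    have hden_le : ∀ w : W, (∑ u : U, p.2 w u) * Qf (ψ t w (Fin.init zs)) y ≤ 1 :=
      fun w => mul_le_one' (hmle w) (hQfle w)
    have hF1 : ∀ w : W, (Fb Qf Qb G2 p φ y).1 w =
        p.1 w * ((∑ u : U, p.2 w u) * Qf (ψ t w (Fin.init zs)) y) /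
          ∑ w' : W, p.1 w' * ((∑ u : U, p.2 w' u) * Qf (ψ t w' (Fin.init zs)) y) := by
      intro w
      show F1 Qf p φ y w = _
      unfold F1
      simp_rw [hsum]
    have hmass : ∀ w : W, (∑ u' : U, (Fb Qf Qb G2 p φ y).2 w u') =
        ((∑ u : U, p.2 w u) * Qf (ψ t w (Fin.init zs)) y) /
          ((∑ u : U, p.2 w u) * Qf (ψ t w (Fin.init zs)) y) := by
      intro w
      show ∑ u' : U, F2 Qf Qb G2 p φ y w u' = _
      rw [F2_mass, hsum w]
    have hD_le : (∑ w' : W, p.1 w' * ((∑ u : U, p.2 w' u) * Qf (ψ t w' (Fin.init zs)) y))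
        ≤ 1 := by
      calc ∑ w' : W, p.1 w' * ((∑ u : U, p.2 w' u) * Qf (ψ t w' (Fin.init zs)) y)
          ≤ ∑ w' : W, p.1 w' * ∑ u : U, p.2 w' u :=
            Finset.sum_le_sum fun w' _ =>
              mul_le_mul' le_rfl (mul_le_of_le_one_right' (hQfle w'))
        _ ≤ 1 := ihs
    have hjoint : ∀ w : W, jointPψ Qf Qb ψ (t + 1) w ys zs =
        jointPψ Qf Qb ψ t w (Fin.init ys) (Fin.init zs) *
          (Qf (ψ t w (Fin.init zs)) y * Qb y (zs (Fin.last t))) := by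
      intro w
      conv_lhs => rw [← Fin.snoc_init_self ys, ← Fin.snoc_init_self zs]
      rw [jointPψ_succ, hy]
    have hS' : (∑ w' : W, jointPψ Qf Qb ψ (t + 1) w' ys zs) =
        (∑ w' : W, jointPψ Qf Qb ψ t w' (Fin.init ys) (Fin.init zs)) *
          (∑ w' : W, p.1 w' * ((∑ u : U, p.2 w' u) * Qf (ψ t w' (Fin.init zs)) y)) *
          Qb y (zs (Fin.last t)) := by
      calc ∑ w' : W, jointPψ Qf Qb ψ (t + 1) w' ys zs
          = ∑ w' : W,
              ((∑ w'' : W, jointPψ Qf Qb ψ t w'' (Fin.init ys) (Fin.init zs)) *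
                Qb y (zs (Fin.last t))) *
                (p.1 w' * ((∑ u : U, p.2 w' u) * Qf (ψ t w' (Fin.init zs)) y)) := by
            refine Finset.sum_congr rfl fun w' _ => ?_
            rw [hjoint w', ihj w']
            ring
        _ = _ := by rw [← Finset.mul_sum]; ring
    refine ⟨?_, ?_, ?_⟩
    · intro w
      rw [hbel, hmass w]
      rcases eq_or_ne ((∑ u : U, p.2 w u) * Qf (ψ t w (Fin.init zs)) y) 0 with h0 | h0
      · left; rw [h0]; simp
      · right
        exact ENNReal.div_self h0 ((hden_le w).trans_lt ENNReal.one_lt_top).ne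
    · rw [hbel]
      calc ∑ w : W, (Fb Qf Qb G2 p φ y).1 w * ∑ u' : U, (Fb Qf Qb G2 p φ y).2 w u'
          ≤ ∑ w : W, (Fb Qf Qb G2 p φ y).1 w := by
            refine Finset.sum_le_sum fun w _ => mul_le_of_le_one_right' ?_
            rw [hmass w]
            exact ENNReal.div_self_le_one
        _ ≤ 1 := by
            simp_rw [hF1]
            rw [← sum_div']
            exact ENNReal.div_self_le_one
    · intro w
      rw [hbel, hjoint w, ihj w, hS', hF1 w, hmass w]
      exact arith _ _ _ _ _ _ (ihm w) (hQfle w) hD_le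
        (Finset.single_le_sum
          (f := fun w' => p.1 w' * ((∑ u : U, p.2 w' u) * Qf (ψ t w' (Fin.init zs)) y))
          (fun _ _ => zero_le) (Finset.mem_univ w))

lemma div_div_helper (a q P A : ℝ≥0∞) (ha : a ≤ P) (hP : P ≤ 1) (hq : q ≤ A) (hA : A ≤ 1) :
    a * q / (P * A) = a / P * q / A := by
  rcases eq_or_ne A 0 with hA0 | hA0
  · have hq0 : q = 0 := le_antisymm (hA0 ▸ hq) (zero_le)
    rw [hq0]; simp
  · rcases eq_or_ne P 0 with hP0 | hP0
    · have ha0 : a = 0 := le_antisymm (hP0 ▸ ha) (zero_le)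
      rw [ha0]; simp
    · have hPt : P ≠ ⊤ := (hP.trans_lt ENNReal.one_lt_top).ne
      rw [div_eq_mul_inv, div_eq_mul_inv, div_eq_mul_inv,
        ENNReal.mul_inv (Or.inl hP0) (Or.inl hPt)]
      ring

lemma sb_succ [Nonempty W] (t : ℕ) (w : W) (zs : Fin t → Z) (z : Z) (u : U) :
    sb Qf Qb G2 u1 ψ (t + 1) w (Fin.snoc zs z) =
      G1 Qf Qb G2 (sb Qf Qb G2 u1 ψ t w zs) (fun q : W × U => ψ t q.1 zs) z u w := by
  funext b
  unfold G1 sb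
  beta_reduce
  rw [tsum_ite_mul (c := fun ys => cndY Qf Qb ψ t w ys zs)
    (bf := fun ys => bel Qf Qb G2 u1 ψ t ys zs)
    (g := fun p => ∑ y : Y, Qf (ψ t w zs) y * Qb y z *
      if b = Fb Qf Qb G2 p (fun q : W × U => ψ t q.1 zs) y then 1 else 0)]
  rw [sum_snoc_s9]
  have hbel1 : ∀ (ys : Fin t → Y) (y : Y),
      bel Qf Qb G2 u1 ψ (t + 1) (Fin.snoc ys y) (Fin.snoc zs z) =
        Fb Qf Qb G2 (bel Qf Qb G2 u1 ψ t ys zs) (fun q : W × U => ψ t q.1 zs) y := by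
    intro ys y
    rw [bel]
    simp
  have hcnd : ∀ (ys : Fin t → Y) (y : Y),
      cndY Qf Qb ψ (t + 1) w (Fin.snoc ys y) (Fin.snoc zs z) =
        jointPψ Qf Qb ψ t w ys zs / probWZψ Qf Qb ψ t w zs *
          (Qf (ψ t w zs) y * Qb y z) / ∑ y' : Y, Qf (ψ t w zs) y' * Qb y' z := by
    intro ys y
    unfold cndY
    rw [jointPψ_succ, probWZψ_succ]
    exact div_div_helper _ _ _ _ (jointPψ_le_probWZψ Qf Qb ψ t w ys zs)
      (probWZψ_le_one Qf Qb ψ t w zs)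
      (Finset.single_le_sum (f := fun y' => Qf (ψ t w zs) y' * Qb y' z)
        (fun _ _ => zero_le) (Finset.mem_univ y))
      (sum_QfQb_le_one Qf Qb _ z)
  rw [sum_div']
  refine Finset.sum_congr rfl fun ys _ => ?_
  rw [Finset.mul_sum, sum_div']
  refine Finset.sum_congr rfl fun y _ => ?_
  rw [hbel1 ys y, hcnd ys y]
  by_cases h : b = Fb Qf Qb G2 (bel Qf Qb G2 u1 ψ t ys zs) (fun q : W × U => ψ t q.1 zs) y
  · simp only [if_pos h, mul_one]
    unfold cndY
    rfl
  · simp [h]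

lemma sb_zero [Nonempty W] (w : W) (zs : Fin 0 → Z) :
    sb Qf Qb G2 u1 ψ 0 w zs = σ0 u1 := by
  funext b
  unfold sb
  rw [Fintype.sum_subsingleton _ (Fin.elim0 : Fin 0 → Y)]
  unfold cndY σ0
  rw [jointPψ_zero, probWZψ_zero, ENNReal.div_self card_inv_ne_zero card_inv_ne_top, one_mul]
  rfl

lemma step_term (A c R : ℝ≥0∞) : A * (c / A * R) ≤ c * R := by
  rw [← mul_assoc]
  exact mul_le_mul_left ENNReal.mul_div_le R

lemma cost_step [Nonempty W] (k t : ℕ) (w : W) (zs : Fin t → Z) :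
    ∑ z : Z, (∑ y : Y, Qf (ψ t w zs) y * Qb y z) *
        Cost Qf Qb G2 u1 ψ k (t + 1) w (Fin.snoc zs z)
      ≤ Cost Qf Qb G2 u1 ψ (k + 1) t w zs := by
  have hR : Cost Qf Qb G2 u1 ψ (k + 1) t w zs
      = ∑ ys : Fin t → Y, ∑ y : Y, ∑ z : Z,
          cndY Qf Qb ψ t w ys zs *
            (Qf (ψ t w zs) y * Qb y z *
              Rem Qf Qb G2 u1 ψ w k (t + 1) (Fin.snoc ys y) (Fin.snoc zs z)) := by
    unfold Cost
    refine Finset.sum_congr rfl fun ys _ => ?_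
    rw [Rem, Finset.mul_sum]
    exact Finset.sum_congr rfl fun y _ => Finset.mul_sum _ _ _
  have hL : ∀ z : Z,
      (∑ y : Y, Qf (ψ t w zs) y * Qb y z) * Cost Qf Qb G2 u1 ψ k (t + 1) w (Fin.snoc zs z)
        = ∑ ys : Fin t → Y, ∑ y : Y, (∑ y' : Y, Qf (ψ t w zs) y' * Qb y' z) *
            (cndY Qf Qb ψ (t + 1) w (Fin.snoc ys y) (Fin.snoc zs z) *
              Rem Qf Qb G2 u1 ψ w k (t + 1) (Fin.snoc ys y) (Fin.snoc zs z)) := by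
    intro z
    unfold Cost
    rw [sum_snoc_s9, Finset.mul_sum]
    exact Finset.sum_congr rfl fun ys _ => Finset.mul_sum _ _ _
  rw [hR]
  calc ∑ z : Z, (∑ y : Y, Qf (ψ t w zs) y * Qb y z) *
        Cost Qf Qb G2 u1 ψ k (t + 1) w (Fin.snoc zs z)
      = ∑ z : Z, ∑ ys : Fin t → Y, ∑ y : Y, (∑ y' : Y, Qf (ψ t w zs) y' * Qb y' z) *
          (cndY Qf Qb ψ (t + 1) w (Fin.snoc ys y) (Fin.snoc zs z) *
            Rem Qf Qb G2 u1 ψ w k (t + 1) (Fin.snoc ys y) (Fin.snoc zs z)) :=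
        Finset.sum_congr rfl fun z _ => hL z
    _ = ∑ ys : Fin t → Y, ∑ y : Y, ∑ z : Z, (∑ y' : Y, Qf (ψ t w zs) y' * Qb y' z) *
          (cndY Qf Qb ψ (t + 1) w (Fin.snoc ys y) (Fin.snoc zs z) *
            Rem Qf Qb G2 u1 ψ w k (t + 1) (Fin.snoc ys y) (Fin.snoc zs z)) := by
        rw [Finset.sum_comm]
        exact Finset.sum_congr rfl fun ys _ => Finset.sum_comm
    _ ≤ _ := by
        refine Finset.sum_le_sum fun ys _ => Finset.sum_le_sum fun y _ =>
          Finset.sum_le_sum fun z _ => ?_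
        have hc : cndY Qf Qb ψ (t + 1) w (Fin.snoc ys y) (Fin.snoc zs z) =
            cndY Qf Qb ψ t w ys zs * (Qf (ψ t w zs) y * Qb y z) /
              ∑ y' : Y, Qf (ψ t w zs) y' * Qb y' z := by
          unfold cndY
          rw [jointPψ_succ, probWZψ_succ]
          exact div_div_helper _ _ _ _ (jointPψ_le_probWZψ Qf Qb ψ t w ys zs)
            (probWZψ_le_one Qf Qb ψ t w zs)
            (Finset.single_le_sum (f := fun y' => Qf (ψ t w zs) y' * Qb y' z)
              (fun _ _ => zero_le) (Finset.mem_univ y))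
            (sum_QfQb_le_one Qf Qb _ z)
        rw [hc]
        calc (∑ y' : Y, Qf (ψ t w zs) y' * Qb y' z) *
              (cndY Qf Qb ψ t w ys zs * (Qf (ψ t w zs) y * Qb y z) /
                  (∑ y' : Y, Qf (ψ t w zs) y' * Qb y' z) *
                Rem Qf Qb G2 u1 ψ w k (t + 1) (Fin.snoc ys y) (Fin.snoc zs z))
            ≤ cndY Qf Qb ψ t w ys zs * (Qf (ψ t w zs) y * Qb y z) *
                Rem Qf Qb G2 u1 ψ w k (t + 1) (Fin.snoc ys y) (Fin.snoc zs z) :=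
              step_term _ _ _
          _ = _ := mul_assoc _ _ _

lemma Vk_le_Cost [Nonempty W] (k : ℕ) : ∀ (t : ℕ) (w : W) (zs : Fin t → Z),
    Vk Qf Qb G2 k (sb Qf Qb G2 u1 ψ t w zs) (memψ G2 u1 ψ w t zs) w
      ≤ Cost Qf Qb G2 u1 ψ k t w zs := by
  induction k with
  | zero =>
    intro t w zs
    simp only [Vk]
    rw [show (sb Qf Qb G2 u1 ψ t w zs) = fun b => ∑ ys : Fin t → Y,
        cndY Qf Qb ψ t w ys zs * if b = bel Qf Qb G2 u1 ψ t ys zs then 1 else 0 from rfl]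
    rw [tsum_ite_mul (c := fun ys => cndY Qf Qb ψ t w ys zs)
      (bf := fun ys => bel Qf Qb G2 u1 ψ t ys zs)
      (g := fun p => 1 - univ.sup fun w' : W => p.1 w')]
    unfold Cost
    refine le_of_eq (Finset.sum_congr rfl fun ys _ => ?_)
    rw [Rem]
  | succ k ih =>
    intro t w zs
    simp only [Vk]
    refine le_trans (iInf_le _ fun q : W × U => ψ t q.1 zs) ?_
    beta_reduce
    refine le_trans ?_ (cost_step Qf Qb G2 u1 ψ k t w zs)
    have hG2 : ∀ z : Z, G2 (memψ G2 u1 ψ w t zs) (fun q : W × U => ψ t q.1 zs) z w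
        = memψ G2 u1 ψ w (t + 1) (Fin.snoc zs z) := by
      intro z
      conv_rhs => rw [memψ]
      simp
    have hG1 : ∀ z : Z, G1 Qf Qb G2 (sb Qf Qb G2 u1 ψ t w zs)
        (fun q : W × U => ψ t q.1 zs) z (memψ G2 u1 ψ w t zs) w
          = sb Qf Qb G2 u1 ψ (t + 1) w (Fin.snoc zs z) :=
      fun z => (sb_succ Qf Qb G2 u1 ψ t w zs z _).symm
    calc ∑ y : Y, ∑ z : Z, Qf (ψ t w zs) y * Qb y z *
          Vk Qf Qb G2 k (G1 Qf Qb G2 (sb Qf Qb G2 u1 ψ t w zs)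
              (fun q : W × U => ψ t q.1 zs) z (memψ G2 u1 ψ w t zs) w)
            (G2 (memψ G2 u1 ψ w t zs) (fun q : W × U => ψ t q.1 zs) z w) w
        = ∑ z : Z, ∑ y : Y, Qf (ψ t w zs) y * Qb y z *
            Vk Qf Qb G2 k (sb Qf Qb G2 u1 ψ (t + 1) w (Fin.snoc zs z))
              (memψ G2 u1 ψ w (t + 1) (Fin.snoc zs z)) w := by
          rw [Finset.sum_comm]
          exact Finset.sum_congr rfl fun z _ => Finset.sum_congr rfl fun y _ => by
            rw [hG1 z, hG2 z]
      _ ≤ ∑ z : Z, ∑ y : Y, Qf (ψ t w zs) y * Qb y z *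
            Cost Qf Qb G2 u1 ψ k (t + 1) w (Fin.snoc zs z) :=
          Finset.sum_le_sum fun z _ => Finset.sum_le_sum fun y _ =>
            mul_le_mul_right (ih (t + 1) w (Fin.snoc zs z)) _
      _ = ∑ z : Z, (∑ y : Y, Qf (ψ t w zs) y * Qb y z) *
            Cost Qf Qb G2 u1 ψ k (t + 1) w (Fin.snoc zs z) :=
          Finset.sum_congr rfl fun z _ => (Finset.sum_mul _ _ _).symm

lemma Tv_succ (k t : ℕ) :
    Tv Qf Qb G2 u1 ψ (k + 1) t = Tv Qf Qb G2 u1 ψ k (t + 1) := by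
  unfold Tv
  simp only [Rem, sum_snoc_s9, jointPψ_succ, Finset.mul_sum, mul_assoc]
  exact Finset.sum_congr rfl fun w _ => Finset.sum_congr rfl fun ys _ => Finset.sum_comm

lemma Tv_eq (k : ℕ) : ∀ t : ℕ, Tv Qf Qb G2 u1 ψ k t = Tv Qf Qb G2 u1 ψ 0 (t + k) := by
  induction k with
  | zero => intro t; rfl
  | succ k ih =>
    intro t
    rw [Tv_succ, ih (t + 1), show t + 1 + k = t + (k + 1) by omega]

lemma jointPψ_le_one [Nonempty W] (t : ℕ) (w : W) (ys : Fin t → Y) (zs : Fin t → Z) :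
    jointPψ Qf Qb ψ t w ys zs ≤ 1 :=
  mul_le_one' card_inv_le_one (Finset.prod_le_one (fun _ _ => zero_le)
    (fun i _ => mul_le_one' (PMF.coe_le_one _ _) (PMF.coe_le_one _ _)))

lemma T0_le [Nonempty W] (n : ℕ) (g : (Fin n → Y) → W) :
    Tv Qf Qb G2 u1 ψ 0 n ≤
      ∑ w : W, ∑ ys : Fin n → Y, ∑ zs : Fin n → Z,
        if g ys ≠ w then jointPψ Qf Qb ψ n w ys zs else 0 := by
  unfold Tv
  simp only [Rem]
  have hswap : ∀ F : W → (Fin n → Y) → (Fin n → Z) → ℝ≥0∞,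
      (∑ w : W, ∑ ys : Fin n → Y, ∑ zs : Fin n → Z, F w ys zs)
        = ∑ ys : Fin n → Y, ∑ zs : Fin n → Z, ∑ w : W, F w ys zs := by
    intro F
    rw [Finset.sum_comm]
    exact Finset.sum_congr rfl fun ys _ => Finset.sum_comm
  rw [hswap, hswap]
  refine Finset.sum_le_sum fun ys _ => Finset.sum_le_sum fun zs _ => ?_
  obtain ⟨hm, hs, hj⟩ := master Qf Qb G2 u1 ψ n ys zs
  have hS_lt : (∑ w' : W, jointPψ Qf Qb ψ n w' ys zs) < ⊤ :=
    lt_of_le_of_lt (Finset.sum_le_sum fun w _ => jointPψ_le_one Qf Qb ψ n w ys zs)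
      (by rw [Finset.sum_const, nsmul_eq_mul, mul_one]; exact ENNReal.natCast_lt_top _)
  have hJg_top : jointPψ Qf Qb ψ n (g ys) ys zs ≠ ⊤ :=
    ((Finset.single_le_sum (f := fun w => jointPψ Qf Qb ψ n w ys zs)
      (fun _ _ => zero_le) (Finset.mem_univ (g ys))).trans_lt hS_lt).ne
  have hsplit : (∑ w : W, if g ys ≠ w then jointPψ Qf Qb ψ n w ys zs else 0) +
      jointPψ Qf Qb ψ n (g ys) ys zs = ∑ w : W, jointPψ Qf Qb ψ n w ys zs := by
    have h1 : jointPψ Qf Qb ψ n (g ys) ys zs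
        = ∑ w : W, if g ys = w then jointPψ Qf Qb ψ n w ys zs else 0 := by
      rw [Finset.sum_ite_eq]
      simp
    rw [h1, ← Finset.sum_add_distrib]
    refine Finset.sum_congr rfl fun w _ => ?_
    by_cases h : g ys = w <;> simp [h]
  have hρ : (bel Qf Qb G2 u1 ψ n ys zs).1 (g ys) *
        (∑ u : U, (bel Qf Qb G2 u1 ψ n ys zs).2 (g ys) u)
      ≤ univ.sup fun w' : W => (bel Qf Qb G2 u1 ψ n ys zs).1 w' := by
    refine le_trans (mul_le_of_le_one_right' ?_) (Finset.le_sup (Finset.mem_univ (g ys)))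
    rcases hm (g ys) with h | h <;> rw [h] <;> exact zero_le_one
  have hJg_le : jointPψ Qf Qb ψ n (g ys) ys zs ≤
      (∑ w' : W, jointPψ Qf Qb ψ n w' ys zs) *
        univ.sup fun w' : W => (bel Qf Qb G2 u1 ψ n ys zs).1 w' := by
    rw [hj (g ys)]
    exact mul_le_mul' le_rfl hρ
  have hLHS : (∑ w : W, jointPψ Qf Qb ψ n w ys zs *
        (1 - univ.sup fun w' : W => (bel Qf Qb G2 u1 ψ n ys zs).1 w'))
      = (∑ w : W, jointPψ Qf Qb ψ n w ys zs) *
        (1 - univ.sup fun w' : W => (bel Qf Qb G2 u1 ψ n ys zs).1 w') :=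
    (Finset.sum_mul _ _ _).symm
  rw [hLHS]
  refine (ENNReal.add_le_add_iff_right hJg_top).mp ?_
  rw [hsplit]
  rcases le_total (univ.sup fun w' : W => (bel Qf Qb G2 u1 ψ n ys zs).1 w') 1 with hx | hx
  · calc (∑ w : W, jointPψ Qf Qb ψ n w ys zs) *
          (1 - univ.sup fun w' : W => (bel Qf Qb G2 u1 ψ n ys zs).1 w') +
          jointPψ Qf Qb ψ n (g ys) ys zs
        ≤ (∑ w : W, jointPψ Qf Qb ψ n w ys zs) *
            (1 - univ.sup fun w' : W => (bel Qf Qb G2 u1 ψ n ys zs).1 w') +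
          (∑ w' : W, jointPψ Qf Qb ψ n w' ys zs) *
            univ.sup fun w' : W => (bel Qf Qb G2 u1 ψ n ys zs).1 w' :=
          add_le_add_right hJg_le _
      _ = (∑ w : W, jointPψ Qf Qb ψ n w ys zs) *
            ((1 - univ.sup fun w' : W => (bel Qf Qb G2 u1 ψ n ys zs).1 w') +
              univ.sup fun w' : W => (bel Qf Qb G2 u1 ψ n ys zs).1 w') :=
          (mul_add _ _ _).symm
      _ = ∑ w : W, jointPψ Qf Qb ψ n w ys zs := by
          rw [tsub_add_cancel_of_le hx, mul_one]
  · have h0 : (1 : ℝ≥0∞) - univ.sup (fun w' : W => (bel Qf Qb G2 u1 ψ n ys zs).1 w') = 0 :=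
      tsub_eq_zero_of_le hx
    rw [h0, mul_zero, zero_add]
    exact Finset.single_le_sum (f := fun w => jointPψ Qf Qb ψ n w ys zs)
      (fun _ _ => zero_le) (Finset.mem_univ (g ys))

lemma lower_bound [Nonempty W] (n : ℕ) (g : (Fin n → Y) → W) :
    (Fintype.card W : ℝ≥0∞)⁻¹ * (∑ w : W, Vk Qf Qb G2 n (σ0 u1) u1 w) ≤
      ∑ w : W, ∑ ys : Fin n → Y, ∑ zs : Fin n → Z,
        if g ys ≠ w then jointPψ Qf Qb ψ n w ys zs else 0 := by
  have hV : ∀ w : W, Vk Qf Qb G2 n (σ0 u1) u1 w ≤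
      Rem Qf Qb G2 u1 ψ w n 0 Fin.elim0 Fin.elim0 := by
    intro w
    have h0 := Vk_le_Cost Qf Qb G2 u1 ψ n 0 w Fin.elim0
    rw [sb_zero] at h0
    calc Vk Qf Qb G2 n (σ0 u1) u1 w
        = Vk Qf Qb G2 n (σ0 u1) (memψ G2 u1 ψ w 0 Fin.elim0) w := rfl
      _ ≤ Cost Qf Qb G2 u1 ψ n 0 w Fin.elim0 := h0
      _ = Rem Qf Qb G2 u1 ψ w n 0 Fin.elim0 Fin.elim0 := by
          unfold Cost
          rw [Fintype.sum_subsingleton _ (Fin.elim0 : Fin 0 → Y)]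
          unfold cndY
          rw [jointPψ_zero, probWZψ_zero,
            ENNReal.div_self card_inv_ne_zero card_inv_ne_top, one_mul]
  calc (Fintype.card W : ℝ≥0∞)⁻¹ * (∑ w : W, Vk Qf Qb G2 n (σ0 u1) u1 w)
      ≤ Tv Qf Qb G2 u1 ψ n 0 := by
        rw [Finset.mul_sum]
        unfold Tv
        refine Finset.sum_le_sum fun w _ => ?_
        rw [Fintype.sum_subsingleton _ (Fin.elim0 : Fin 0 → Y),
          Fintype.sum_subsingleton _ (Fin.elim0 : Fin 0 → Z), jointPψ_zero]
        exact mul_le_mul' le_rfl (hV w)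
    _ = Tv Qf Qb G2 u1 ψ 0 (0 + n) := Tv_eq Qf Qb G2 u1 ψ n 0
    _ = Tv Qf Qb G2 u1 ψ 0 n := by rw [Nat.zero_add]
    _ ≤ _ := T0_le Qf Qb G2 u1 ψ n g

end DP

/-- **Theorem 1: the dynamic program lower-bounds every history-dependent encoder, and
any encoder attaining the bound is optimal** (Statement 9).  For every history-dependent
deterministic encoder `ψ` with MAP decoding, `P_e(ψ) ≥ (1/|𝒲|) Σ_w V_1(σ₀, u₁, w)`
(with `V_1 = Vk n`); consequently any encoder achieving this value is optimal among all
history-dependent encoders. -/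
theorem dp_optimality [Nonempty W] [Nonempty X] [Nonempty Y] [Nonempty Z] [Nonempty U]
    (Qf : X → PMF Y) (Qb : Y → PMF Z)
    (G2 : U → (W × U → X) → Z → W → U) (u1 : U) (n : ℕ) :
    (∀ (ψ : (t : ℕ) → W → (Fin t → Z) → X) (gMAP : (Fin n → Y) → W),
      (∀ (ys : Fin n → Y) (w : W),
          probWYψ Qf Qb ψ n ys w ≤ probWYψ Qf Qb ψ n ys (gMAP ys)) →
      (Fintype.card W : ℝ≥0∞)⁻¹ * (∑ w : W, Vk Qf Qb G2 n (σ0 u1) u1 w) ≤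
        ∑ w : W, ∑ ys : Fin n → Y, ∑ zs : Fin n → Z,
          if gMAP ys ≠ w then jointPψ Qf Qb ψ n w ys zs else 0) ∧
    ∀ (ψstar : (t : ℕ) → W → (Fin t → Z) → X) (gstar : (Fin n → Y) → W),
      (∀ (ys : Fin n → Y) (w : W),
          probWYψ Qf Qb ψstar n ys w ≤ probWYψ Qf Qb ψstar n ys (gstar ys)) →
      (∑ w : W, ∑ ys : Fin n → Y, ∑ zs : Fin n → Z,
          if gstar ys ≠ w then jointPψ Qf Qb ψstar n w ys zs else 0) =
        (Fintype.card W : ℝ≥0∞)⁻¹ * (∑ w : W, Vk Qf Qb G2 n (σ0 u1) u1 w) →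
      ∀ (ψ : (t : ℕ) → W → (Fin t → Z) → X) (gMAP : (Fin n → Y) → W),
        (∀ (ys : Fin n → Y) (w : W),
            probWYψ Qf Qb ψ n ys w ≤ probWYψ Qf Qb ψ n ys (gMAP ys)) →
        (∑ w : W, ∑ ys : Fin n → Y, ∑ zs : Fin n → Z,
            if gstar ys ≠ w then jointPψ Qf Qb ψstar n w ys zs else 0) ≤
          ∑ w : W, ∑ ys : Fin n → Y, ∑ zs : Fin n → Z,
            if gMAP ys ≠ w then jointPψ Qf Qb ψ n w ys zs else 0 := by
  constructor
  · intro ψ g _h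
    exact lower_bound Qf Qb G2 u1 ψ n g
  · intro ψs gs _hs heq ψ g _h
    rw [heq]
    exact lower_bound Qf Qb G2 u1 ψ n g

end NoisyFeedback
end
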